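/- For all i, j ∈ {1,…,K}: 4·Re[⟨Qφ_i, Qφ_j⟩ − ⟨Qφ_i, ψ(θ,φ)⟩⟨ψ(θ,φ), Qφ_j⟩] = −8·Tr[Ψ_φ†(H_j) √ρ(θ) Ψ_φ†(H_i) √ρ(θ)] + 4·Tr[{Ψ_φ†(H_i), Ψ_φ†(H_j)} ρ(θ)] (an equality of complex numbers whose left-hand side is real); that is, the Wigner–Yanase information matrix elements of the evolved quantum Boltzmann machine with respect to the φ parameters are I^WY_{ij}(φ) = −8 Tr[Ψ_φ†(H_j)√ρ(θ)Ψ_φ†(H_i)√ρ(θ)] + 4⟨{Ψ_φ†(H_i),Ψ_φ†(H_j)}⟩_{ρ(θ)}. -/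

import Mathlib

open MeasureTheory Matrix
open scoped Kronecker

noncomputable section

attribute [local instance] Matrix.normedAddCommGroup Matrix.normedSpace

/-- Square complex matrices. -/
abbrev Mat (n : ℕ) := Matrix (Fin n) (Fin n) ℂ

/-- The parameterized Hamiltonian `G(θ) = ∑ j, θ j • G j`. -/
def Gm {n J : ℕ} (G : Fin J → Mat n) (θ : Fin J → ℝ) : Mat n := ∑ j, (θ j : ℂ) • G j

/-- The parameterized Hamiltonian `H(φ) = ∑ k, φ k • H k`. -/
def Hm {n K : ℕ} (H : Fin K → Mat n) (φ : Fin K → ℝ) : Mat n := ∑ k, (φ k : ℂ) • H k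

/-- The partition function `Z(θ) = Tr[exp (−G(θ))]` (a positive real). -/
def Zpf {n J : ℕ} (G : Fin J → Mat n) (θ : Fin J → ℝ) : ℝ :=
  (Matrix.trace (NormedSpace.exp (-(Gm G θ)))).re

/-- The quantum Boltzmann machine `ρ(θ) = exp(−G(θ))/Z(θ)`. -/
def qbm {n J : ℕ} (G : Fin J → Mat n) (θ : Fin J → ℝ) : Mat n :=
  ((Zpf G θ : ℂ))⁻¹ • NormedSpace.exp (-(Gm G θ))

/-- The unitary `exp(−i H(φ))`. -/
def uH {n K : ℕ} (H : Fin K → Mat n) (φ : Fin K → ℝ) : Mat n :=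
  NormedSpace.exp (-(Complex.I • Hm H φ))

/-- The unitary `exp(i H(φ))`. -/
def uH' {n K : ℕ} (H : Fin K → Mat n) (φ : Fin K → ℝ) : Mat n :=
  NormedSpace.exp (Complex.I • Hm H φ)

/-- The evolved quantum Boltzmann machine `ω(θ,φ) = exp(−iH(φ)) ρ(θ) exp(iH(φ))`. -/
def eqbm {n J K : ℕ} (G : Fin J → Mat n) (H : Fin K → Mat n)
    (θ : Fin J → ℝ) (φ : Fin K → ℝ) : Mat n :=
  uH H φ * qbm G θ * uH' H φ

/-- The high-peak-tent probability density `p(t) = (2/π) ln |coth (π t / 2)|`. -/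
def hpt (t : ℝ) : ℝ :=
  (2 / Real.pi) * Real.log |Real.cosh (Real.pi * t / 2) / Real.sinh (Real.pi * t / 2)|

/-- The channel `Φ_{θ/2}(X) = ∫ℝ p(t) exp(−iG(θ)t/2) X exp(iG(θ)t/2) dt`. -/
def chanΦhalf {n J : ℕ} (G : Fin J → Mat n) (θ : Fin J → ℝ) (X : Mat n) : Mat n :=
  ∫ t : ℝ, hpt t •
    (NormedSpace.exp ((-(Complex.I * (t : ℂ)) / 2) • Gm G θ) * X *
      NormedSpace.exp ((Complex.I * (t : ℂ) / 2) • Gm G θ))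

/-- The channel `Ψ_φ(X) = ∫₀¹ exp(−iH(φ)t) X exp(iH(φ)t) dt`. -/
def chanΨ {n K : ℕ} (H : Fin K → Mat n) (φ : Fin K → ℝ) (X : Mat n) : Mat n :=
  ∫ t in (0:ℝ)..1,
    (NormedSpace.exp ((-(Complex.I * (t : ℂ))) • Hm H φ) * X *
      NormedSpace.exp ((Complex.I * (t : ℂ)) • Hm H φ))

/-- The adjoint channel `Ψ_φ†(X) = ∫₀¹ exp(iH(φ)t) X exp(−iH(φ)t) dt`. -/
def chanΨdag {n K : ℕ} (H : Fin K → Mat n) (φ : Fin K → ℝ) (X : Mat n) : Mat n :=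
  ∫ t in (0:ℝ)..1,
    (NormedSpace.exp ((Complex.I * (t : ℂ)) • Hm H φ) * X *
      NormedSpace.exp ((-(Complex.I * (t : ℂ))) • Hm H φ))

/-- `√ρ(θ) = exp(−G(θ)/2)/√Z(θ)`. -/
def sqrtρ {n J : ℕ} (G : Fin J → Mat n) (θ : Fin J → ℝ) : Mat n :=
  ((Real.sqrt (Zpf G θ) : ℂ))⁻¹ • NormedSpace.exp (-((1 / 2 : ℂ) • Gm G θ))

/-- `√ω(θ,φ) = exp(−iH(φ)) √ρ(θ) exp(iH(φ))`. -/
def sqrtω {n J K : ℕ} (G : Fin J → Mat n) (H : Fin K → Mat n)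
    (θ : Fin J → ℝ) (φ : Fin K → ℝ) : Mat n :=
  uH H φ * sqrtρ G θ * uH' H φ

/-- The maximally entangled vector `Γ ∈ ℂ^{n²}`, `Γ_{(a,b)} = δ_{a,b}`. -/
def Γv (n : ℕ) : Fin n × Fin n → ℂ := fun ab => if ab.1 = ab.2 then 1 else 0

/-- The canonically purified evolved quantum Boltzmann machine `ψ(θ,φ) = (√ω(θ,φ) ⊗ I)Γ`. -/
def ψv {n J K : ℕ} (G : Fin J → Mat n) (H : Fin K → Mat n)
    (θ : Fin J → ℝ) (φ : Fin K → ℝ) : Fin n × Fin n → ℂ :=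
  (sqrtω G H θ φ ⊗ₖ (1 : Mat n)).mulVec (Γv n)

/-- The partial derivative of `ψ(θ,φ)` with respect to `θ_j`:
`Qθ_j = (1/2)⟨G_j⟩_{ρ(θ)} ψ(θ,φ) − (1/4)((exp(−iH(φ)) {Φ_{θ/2}(G_j), √ρ(θ)} exp(iH(φ))) ⊗ I)Γ`. -/
def Qθ {n J K : ℕ} (G : Fin J → Mat n) (H : Fin K → Mat n)
    (θ : Fin J → ℝ) (φ : Fin K → ℝ) (j : Fin J) : Fin n × Fin n → ℂ :=
  ((1 / 2 : ℂ) * Matrix.trace (G j * qbm G θ)) • ψv G H θ φ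
    - (1 / 4 : ℂ) •
        ((uH H φ * (chanΦhalf G θ (G j) * sqrtρ G θ + sqrtρ G θ * chanΦhalf G θ (G j)) *
            uH' H φ) ⊗ₖ (1 : Mat n)).mulVec (Γv n)

/-- The partial derivative of `ψ(θ,φ)` with respect to `φ_k`:
`Qφ_k = i(([√ω(θ,φ), Ψ_φ(H_k)]) ⊗ I)Γ`. -/
def Qφ {n J K : ℕ} (G : Fin J → Mat n) (H : Fin K → Mat n)
    (θ : Fin J → ℝ) (φ : Fin K → ℝ) (k : Fin K) : Fin n × Fin n → ℂ :=
  Complex.I •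
    ((sqrtω G H θ φ * chanΨ H φ (H k) - chanΨ H φ (H k) * sqrtω G H θ φ) ⊗ₖ (1 : Mat n)).mulVec
      (Γv n)

/-- `⟨x, y⟩ = ∑ m, conj (x m) * y m` on `ℂ^{n²}`. -/
def dotc2 {n : ℕ} (x y : Fin n × Fin n → ℂ) : ℂ := ∑ m, (starRingEnd ℂ) (x m) * y m

/-! ### Auxiliary lemmas -/

lemma kron_mulVec_Γ {n : ℕ} (X : Mat n) :
    ((X ⊗ₖ (1 : Mat n)).mulVec (Γv n)) = fun ab => X ab.1 ab.2 := by
  funext ab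
  simp [Matrix.mulVec, dotProduct, Γv, Fintype.sum_prod_type, Matrix.one_apply,
    mul_ite, ite_and, Finset.sum_ite_eq, Finset.sum_ite_eq']

lemma dotc2_kron {n : ℕ} (X Y : Mat n) :
    dotc2 ((X ⊗ₖ (1 : Mat n)).mulVec (Γv n)) ((Y ⊗ₖ (1 : Mat n)).mulVec (Γv n))
      = Matrix.trace (Xᴴ * Y) := by
  rw [kron_mulVec_Γ, kron_mulVec_Γ]
  simp only [dotc2, Matrix.trace, Matrix.diag, Matrix.mul_apply, Matrix.conjTranspose_apply,
    Fintype.sum_prod_type]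
  rw [Finset.sum_comm]
  rfl

lemma exp_smul_add {n : ℕ} (M : Mat n) (a b : ℂ) :
    NormedSpace.exp (a • M) * NormedSpace.exp (b • M) = NormedSpace.exp ((a+b) • M) := by
  rw [add_smul, Matrix.exp_add_of_commute]
  exact ((Commute.refl M).smul_left a).smul_right b

lemma exp_smul_herm {n : ℕ} {M : Mat n} (hM : M.IsHermitian) (z : ℂ) :
    (NormedSpace.exp (z • M))ᴴ = NormedSpace.exp ((starRingEnd ℂ z) • M) := by
  rw [← Matrix.exp_conjTranspose]
  congr 1
  rw [Matrix.conjTranspose_smul, hM.eq]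
  rfl

instance {n : ℕ} : FiniteDimensional ℝ (Mat n) :=
  Module.Finite.trans ℂ (Mat n)

lemma cle_intervalIntegral {E F : Type*} [NormedAddCommGroup E] [NormedSpace ℝ E]
    [NormedAddCommGroup F] [NormedSpace ℝ F] [CompleteSpace E] [CompleteSpace F]
    (L : E ≃L[ℝ] F) (f : ℝ → E) (a b : ℝ) :
    (∫ t in a..b, L (f t)) = L (∫ t in a..b, f t) := by
  rw [intervalIntegral, intervalIntegral, L.integral_comp_comm, L.integral_comp_comm, map_sub]

def cTEquiv (n : ℕ) : Mat n ≃L[ℝ] Mat n :=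
  LinearEquiv.toContinuousLinearEquiv
    { toFun := fun X => Xᴴ
      invFun := fun X => Xᴴ
      map_add' := fun X Y => Matrix.conjTranspose_add X Y
      map_smul' := fun r X => by simp [Matrix.conjTranspose_smul]
      left_inv := fun X => Matrix.conjTranspose_conjTranspose X
      right_inv := fun X => Matrix.conjTranspose_conjTranspose X }

lemma conjTranspose_intervalIntegral {n : ℕ} (f : ℝ → Mat n) (a b : ℝ) :
    (∫ t in a..b, f t)ᴴ = ∫ t in a..b, (f t)ᴴ :=
  (cle_intervalIntegral (cTEquiv n) f a b).symm

def mulLREquiv {n : ℕ} (P Q : Mat n) (hPQ : P * Q = 1) (hQP : Q * P = 1) :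
    Mat n ≃L[ℝ] Mat n :=
  LinearEquiv.toContinuousLinearEquiv
    { toFun := fun X => P * X * Q
      invFun := fun X => Q * X * P
      map_add' := fun X Y => by noncomm_ring
      map_smul' := fun r X => by simp [Matrix.mul_smul, Matrix.smul_mul]
      left_inv := fun X => by
        simp only [← mul_assoc, hQP, one_mul]
        rw [mul_assoc, hQP, mul_one]
      right_inv := fun X => by
        simp only [← mul_assoc, hPQ, one_mul]
        rw [mul_assoc, hPQ, mul_one] }

lemma mulLR_intervalIntegral {n : ℕ} (P Q : Mat n) (hPQ : P * Q = 1) (hQP : Q * P = 1)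
    (f : ℝ → Mat n) (a b : ℝ) :
    (∫ t in a..b, P * f t * Q) = P * (∫ t in a..b, f t) * Q :=
  cle_intervalIntegral (mulLREquiv P Q hPQ hQP) f a b

lemma Hm_herm {n K : ℕ} {H : Fin K → Mat n} (hH : ∀ k, (H k).IsHermitian) (φ : Fin K → ℝ) :
    (Hm H φ).IsHermitian := by
  unfold Matrix.IsHermitian Hm
  rw [Matrix.conjTranspose_sum]
  refine Finset.sum_congr rfl fun k _ => ?_
  rw [Matrix.conjTranspose_smul, (hH k).eq]
  simp [Complex.star_def]

lemma Gm_herm {n J : ℕ} {G : Fin J → Mat n} (hG : ∀ j, (G j).IsHermitian) (θ : Fin J → ℝ) :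
    (Gm G θ).IsHermitian := by
  unfold Matrix.IsHermitian Gm
  rw [Matrix.conjTranspose_sum]
  refine Finset.sum_congr rfl fun j _ => ?_
  rw [Matrix.conjTranspose_smul, (hG j).eq]
  simp [Complex.star_def]

lemma uH_mul_uH' {n K : ℕ} (H : Fin K → Mat n) (φ : Fin K → ℝ) :
    uH H φ * uH' H φ = 1 := by
  rw [uH, uH', show -(Complex.I • Hm H φ) = (-Complex.I) • Hm H φ from (neg_smul _ _).symm,
    show Complex.I • Hm H φ = (Complex.I : ℂ) • Hm H φ from rfl, exp_smul_add]
  simp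

lemma uH'_mul_uH {n K : ℕ} (H : Fin K → Mat n) (φ : Fin K → ℝ) :
    uH' H φ * uH H φ = 1 := by
  rw [uH, uH', show -(Complex.I • Hm H φ) = (-Complex.I) • Hm H φ from (neg_smul _ _).symm,
    show Complex.I • Hm H φ = (Complex.I : ℂ) • Hm H φ from rfl, exp_smul_add]
  simp

lemma uH_ct {n K : ℕ} {H : Fin K → Mat n} (hH : ∀ k, (H k).IsHermitian) (φ : Fin K → ℝ) :
    (uH H φ)ᴴ = uH' H φ := by
  rw [uH, uH', show -(Complex.I • Hm H φ) = (-Complex.I) • Hm H φ from (neg_smul _ _).symm,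
    show Complex.I • Hm H φ = (Complex.I : ℂ) • Hm H φ from rfl,
    exp_smul_herm (Hm_herm hH φ)]
  simp

lemma uH'_ct {n K : ℕ} {H : Fin K → Mat n} (hH : ∀ k, (H k).IsHermitian) (φ : Fin K → ℝ) :
    (uH' H φ)ᴴ = uH H φ := by
  rw [uH, uH', show -(Complex.I • Hm H φ) = (-Complex.I) • Hm H φ from (neg_smul _ _).symm,
    show Complex.I • Hm H φ = (Complex.I : ℂ) • Hm H φ from rfl,
    exp_smul_herm (Hm_herm hH φ)]
  simp

lemma chanΨ_herm {n K : ℕ} {H : Fin K → Mat n} (hH : ∀ k, (H k).IsHermitian)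
    (φ : Fin K → ℝ) {X : Mat n} (hX : X.IsHermitian) :
    (chanΨ H φ X)ᴴ = chanΨ H φ X := by
  rw [chanΨ, conjTranspose_intervalIntegral]
  refine intervalIntegral.integral_congr fun t _ => ?_
  rw [Matrix.conjTranspose_mul, Matrix.conjTranspose_mul,
    exp_smul_herm (Hm_herm hH φ), exp_smul_herm (Hm_herm hH φ), hX.eq]
  simp [mul_assoc, Complex.conj_ofReal, _root_.map_mul]

lemma chanΨdag_eq {n K : ℕ} (H : Fin K → Mat n) (φ : Fin K → ℝ) (X : Mat n) :
    chanΨdag H φ X = uH' H φ * chanΨ H φ X * uH H φ := by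
  rw [chanΨ, ← mulLR_intervalIntegral _ _ (uH'_mul_uH H φ) (uH_mul_uH' H φ)]
  have h := intervalIntegral.integral_comp_sub_left (a := (0:ℝ)) (b := 1)
    (fun s : ℝ => NormedSpace.exp ((Complex.I * (s : ℂ)) • Hm H φ) * X *
      NormedSpace.exp ((-(Complex.I * (s : ℂ))) • Hm H φ)) 1
  simp only [sub_zero, sub_self] at h
  rw [chanΨdag, ← h]
  refine intervalIntegral.integral_congr fun t _ => ?_
  rw [uH', uH, show -(Complex.I • Hm H φ) = (-Complex.I) • Hm H φ from (neg_smul _ _).symm,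
    show Complex.I • Hm H φ = (Complex.I : ℂ) • Hm H φ from rfl]
  conv_rhs => rw [← mul_assoc, ← mul_assoc, exp_smul_add, mul_assoc, exp_smul_add]
  rw [show Complex.I + -(Complex.I * (t:ℂ)) = Complex.I * ((1 - t : ℝ) : ℂ) by push_cast; ring,
    show Complex.I * (t:ℂ) + -Complex.I = -(Complex.I * ((1 - t : ℝ) : ℂ)) by push_cast; ring]

lemma sqrtρ_herm {n J : ℕ} {G : Fin J → Mat n} (hG : ∀ j, (G j).IsHermitian) (θ : Fin J → ℝ) :
    (sqrtρ G θ)ᴴ = sqrtρ G θ := by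
  rw [sqrtρ, show -((1/2 : ℂ) • Gm G θ) = (-(1/2) : ℂ) • Gm G θ from (neg_smul _ _).symm,
    Matrix.conjTranspose_smul, exp_smul_herm (Gm_herm hG θ),
    show (starRingEnd ℂ) (-(1/2) : ℂ) = -(1/2) by simp [map_neg, map_div₀, map_ofNat]]
  congr 1
  simp [Complex.star_def, Complex.conj_ofReal]

lemma Zpf_nonneg {n J : ℕ} {G : Fin J → Mat n} (hG : ∀ j, (G j).IsHermitian) (θ : Fin J → ℝ) :
    0 ≤ Zpf G θ := by
  have hE : NormedSpace.exp (-(Gm G θ))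
      = NormedSpace.exp ((-(1/2) : ℂ) • Gm G θ) *
        (NormedSpace.exp ((-(1/2) : ℂ) • Gm G θ))ᴴ := by
    rw [exp_smul_herm (Gm_herm hG θ), exp_smul_add,
      show (-(1/2) + (starRingEnd ℂ) (-(1/2)) : ℂ) = -1 by simp [map_neg, map_div₀, map_ofNat]; norm_num,
      neg_one_smul]
  rw [Zpf, hE]
  have : Matrix.trace (NormedSpace.exp ((-(1/2) : ℂ) • Gm G θ) *
        (NormedSpace.exp ((-(1/2) : ℂ) • Gm G θ))ᴴ)
      = ∑ a, ∑ b, ((Complex.normSq ((NormedSpace.exp ((-(1/2) : ℂ) • Gm G θ)) a b) : ℝ) : ℂ) := by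
    simp only [Matrix.trace, Matrix.diag, Matrix.mul_apply, Matrix.conjTranspose_apply]
    refine Finset.sum_congr rfl fun a _ => Finset.sum_congr rfl fun b _ => ?_
    rw [← Complex.mul_conj]
    rfl
  rw [this]
  have h2 : (∑ a, ∑ b, ((Complex.normSq ((NormedSpace.exp ((-(1/2) : ℂ) • Gm G θ)) a b) : ℝ) : ℂ))
      = (((∑ a, ∑ b, Complex.normSq ((NormedSpace.exp ((-(1/2) : ℂ) • Gm G θ)) a b)) : ℝ) : ℂ) := by
    push_cast; rfl
  rw [h2, Complex.ofReal_re]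
  exact Finset.sum_nonneg fun a _ => Finset.sum_nonneg fun b _ => Complex.normSq_nonneg _

lemma sqrtρ_sq {n J : ℕ} {G : Fin J → Mat n} (hG : ∀ j, (G j).IsHermitian) (θ : Fin J → ℝ) :
    sqrtρ G θ * sqrtρ G θ = qbm G θ := by
  rw [sqrtρ, qbm, Matrix.smul_mul, Matrix.mul_smul, smul_smul,
    show -((1/2 : ℂ) • Gm G θ) = (-(1/2) : ℂ) • Gm G θ from (neg_smul _ _).symm,
    exp_smul_add,
    show (-(1/2) + -(1/2) : ℂ) = -1 by norm_num,
    show ((-1 : ℂ)) • Gm G θ = -(Gm G θ) from neg_one_smul _ _]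
  congr 1
  rw [← mul_inv, ← Complex.ofReal_mul, Real.mul_self_sqrt (Zpf_nonneg hG θ)]

lemma tr_rot2 {n : ℕ} (a b c d : Mat n) :
    Matrix.trace (a * b * c * d) = Matrix.trace (c * d * a * b) := by
  rw [mul_assoc (a*b) c d, Matrix.trace_mul_comm, ← mul_assoc]

lemma tr_rot1 {n : ℕ} (a b c d : Mat n) :
    Matrix.trace (a * b * c * d) = Matrix.trace (d * a * b * c) := by
  rw [Matrix.trace_mul_comm, ← mul_assoc, ← mul_assoc]


lemma key {n : ℕ} (u u' s Ai Aj ρ : Mat n)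
    (huu' : u * u' = 1) (hu'u : u' * u = 1) (hss : s * s = ρ)
    (hsh : sᴴ = s) (hAi : Aiᴴ = Ai) (hAj : Ajᴴ = Aj)
    (hcu : uᴴ = u') (hcu' : u'ᴴ = u) :
    ((4 * (Matrix.trace ((Complex.I • (u*s*u'*Ai - Ai*(u*s*u')))ᴴ * (Complex.I • (u*s*u'*Aj - Aj*(u*s*u'))))
        - Matrix.trace ((Complex.I • (u*s*u'*Ai - Ai*(u*s*u')))ᴴ * (u*s*u'))
          * Matrix.trace ((u*s*u')ᴴ * (Complex.I • (u*s*u'*Aj - Aj*(u*s*u'))))).re : ℝ) : ℂ)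
      = -8 * Matrix.trace (u' * Aj * u * s * (u' * Ai * u) * s)
        + 4 * Matrix.trace ((u' * Ai * u * (u' * Aj * u) + u' * Aj * u * (u' * Ai * u)) * ρ) := by
  have c1 : ∀ X : Mat n, u * (u' * X) = X := fun X => by rw [← mul_assoc, huu', one_mul]
  have c2 : ∀ X : Mat n, u' * (u * X) = X := fun X => by rw [← mul_assoc, hu'u, one_mul]
  have c3 : ∀ X : Mat n, s * (s * X) = ρ * X := fun X => by rw [← mul_assoc, hss]
  have hwh : (u * s * u')ᴴ = u * s * u' := by
    rw [Matrix.conjTranspose_mul, Matrix.conjTranspose_mul, hcu', hsh, hcu, ← mul_assoc]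
  have hCih : (u*s*u'*Ai - Ai*(u*s*u'))ᴴ = -(u*s*u'*Ai - Ai*(u*s*u')) := by
    rw [Matrix.conjTranspose_sub, Matrix.conjTranspose_mul (u*s*u') Ai,
      Matrix.conjTranspose_mul Ai (u*s*u'), hwh, hAi]
    noncomm_ring
  have hCjh : (u*s*u'*Aj - Aj*(u*s*u'))ᴴ = -(u*s*u'*Aj - Aj*(u*s*u')) := by
    rw [Matrix.conjTranspose_sub, Matrix.conjTranspose_mul (u*s*u') Aj,
      Matrix.conjTranspose_mul Aj (u*s*u'), hwh, hAj]
    noncomm_ring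
  set Ci := u*s*u'*Ai - Ai*(u*s*u') with hCi
  set Cj := u*s*u'*Aj - Aj*(u*s*u') with hCj
  have tQQ : Matrix.trace ((Complex.I • Ci)ᴴ * (Complex.I • Cj)) = - Matrix.trace (Ci * Cj) := by
    rw [Matrix.conjTranspose_smul, hCih]
    simp only [Complex.star_def, Complex.conj_I, Matrix.smul_mul, Matrix.mul_smul, smul_smul,
      Matrix.neg_mul, Matrix.trace_smul, Matrix.trace_neg, smul_neg]
    rw [show (Complex.I * -Complex.I : ℂ) = 1 from by simp, one_smul]
  have h0 : Matrix.trace (Ci * (u*s*u')) = 0 := by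
    rw [hCi, Matrix.sub_mul, Matrix.trace_sub,
      Matrix.trace_mul_comm (u*s*u'*Ai) (u*s*u'),
      show (u*s*u') * (u*s*u'*Ai) = ((u*s*u')*(u*s*u'))*Ai from by simp only [mul_assoc],
      Matrix.trace_mul_comm ((u*s*u')*(u*s*u')) Ai,
      mul_assoc Ai (u*s*u') (u*s*u'), sub_self]
  have tQψ : Matrix.trace ((Complex.I • Ci)ᴴ * (u*s*u')) = 0 := by
    rw [Matrix.conjTranspose_smul, hCih]
    simp only [Complex.star_def, Complex.conj_I, Matrix.smul_mul, Matrix.neg_mul,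
      Matrix.trace_smul, Matrix.trace_neg, smul_neg, h0]
    simp
  rw [tQQ, tQψ, zero_mul, sub_zero]
  have hreal : (starRingEnd ℂ) (Matrix.trace (Ci * Cj)) = Matrix.trace (Ci * Cj) := by
    have h1 : Matrix.trace ((Ci * Cj)ᴴ) = star (Matrix.trace (Ci * Cj)) :=
      Matrix.trace_conjTranspose _
    rw [Matrix.conjTranspose_mul, hCih, hCjh, Matrix.neg_mul, Matrix.mul_neg, neg_neg,
      Matrix.trace_mul_comm] at h1
    exact h1.symm
  have hre : (((- Matrix.trace (Ci * Cj)).re : ℝ) : ℂ) = - Matrix.trace (Ci * Cj) :=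
    Complex.conj_eq_iff_re.mp (by rw [map_neg, hreal])
  rw [show ((4 * (- Matrix.trace (Ci * Cj)).re : ℝ) : ℂ)
      = 4 * (((- Matrix.trace (Ci * Cj)).re : ℝ) : ℂ) from by push_cast; ring, hre]
  have hexp : Ci * Cj
      = (u*s*u'*Ai) * ((u*s*u')*Aj) - (u*s*u'*Ai) * (Aj*(u*s*u'))
        - (Ai*(u*s*u')) * ((u*s*u')*Aj) + (Ai*(u*s*u')) * (Aj*(u*s*u')) := by
    rw [hCi, hCj]; noncomm_ring
  have e1 : Matrix.trace ((u*s*u'*Ai) * ((u*s*u')*Aj))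
      = Matrix.trace (u' * (Aj * (u * (s * (u' * (Ai * (u * s))))))) := by
    rw [show (u*s*u'*Ai) * ((u*s*u')*Aj) = (u*(s*(u'*(Ai*(u*s))))) * (u'*Aj) from by
      simp only [mul_assoc], Matrix.trace_mul_comm]
    simp only [mul_assoc]
  have e2 : Matrix.trace ((u*s*u'*Ai) * (Aj*(u*s*u')))
      = Matrix.trace (Ai * (Aj * (u * (ρ * u')))) := by
    rw [show (u*s*u'*Ai) * (Aj*(u*s*u')) = (u*(s*u')) * (Ai*(Aj*(u*(s*u')))) from by
      simp only [mul_assoc], Matrix.trace_mul_comm]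
    simp only [mul_assoc, c2, c3]
  have e3 : Matrix.trace ((Ai*(u*s*u')) * ((u*s*u')*Aj))
      = Matrix.trace (Aj * (Ai * (u * (ρ * u')))) := by
    have h : (Ai*(u*s*u')) * ((u*s*u')*Aj) = (Ai*(u*(ρ*u')))*Aj := by
      simp only [mul_assoc, c2, c3]
    rw [h, Matrix.trace_mul_comm]
  have e4 : Matrix.trace ((Ai*(u*s*u')) * (Aj*(u*s*u')))
      = Matrix.trace (u' * (Aj * (u * (s * (u' * (Ai * (u * s))))))) := by
    rw [show (Ai*(u*s*u')) * (Aj*(u*s*u')) = (Ai*(u*s)) * (u'*(Aj*(u*(s*u')))) from by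
      simp only [mul_assoc], Matrix.trace_mul_comm]
    simp only [mul_assoc]
  have r0 : Matrix.trace (u' * Aj * u * s * (u' * Ai * u) * s)
      = Matrix.trace (u' * (Aj * (u * (s * (u' * (Ai * (u * s))))))) := by
    simp only [mul_assoc]
  have r2a : Matrix.trace ((u' * Ai * u * (u' * Aj * u)) * ρ)
      = Matrix.trace (Ai * (Aj * (u * (ρ * u')))) := by
    rw [show (u' * Ai * u * (u' * Aj * u)) * ρ = u' * (Ai*(u*(u'*(Aj*(u*ρ))))) from by
      simp only [mul_assoc], Matrix.trace_mul_comm]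
    simp only [mul_assoc, c1]
  have r2b : Matrix.trace ((u' * Aj * u * (u' * Ai * u)) * ρ)
      = Matrix.trace (Aj * (Ai * (u * (ρ * u')))) := by
    rw [show (u' * Aj * u * (u' * Ai * u)) * ρ = u' * (Aj*(u*(u'*(Ai*(u*ρ))))) from by
      simp only [mul_assoc], Matrix.trace_mul_comm]
    simp only [mul_assoc, c1]
  rw [hexp, Matrix.trace_add, Matrix.trace_sub, Matrix.trace_sub, e1, e2, e3, e4,
    Matrix.add_mul, Matrix.trace_add, r0, r2a, r2b]
  ring

/-- Wigner–Yanase information matrix elements of the evolved quantum Boltzmann machine with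
respect to the `φ` parameters: `I^WY_{ij}(φ) = −8 Tr[Ψ_φ†(H_j)√ρ(θ)Ψ_φ†(H_i)√ρ(θ)]
+ 4⟨{Ψ_φ†(H_i),Ψ_φ†(H_j)}⟩_{ρ(θ)}`. -/
theorem stmt14 {n J K : ℕ} (hn : 1 ≤ n) (hJ : 1 ≤ J) (hK : 1 ≤ K)
    (G : Fin J → Mat n) (H : Fin K → Mat n)
    (hG : ∀ j, (G j).IsHermitian) (hH : ∀ k, (H k).IsHermitian)
    (θ : Fin J → ℝ) (φ : Fin K → ℝ)
    (i j : Fin K) :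
    ((4 * (dotc2 (Qφ G H θ φ i) (Qφ G H θ φ j)
        - dotc2 (Qφ G H θ φ i) (ψv G H θ φ) * dotc2 (ψv G H θ φ) (Qφ G H θ φ j)).re : ℝ) : ℂ)
      = -8 * Matrix.trace (chanΨdag H φ (H j) * sqrtρ G θ * chanΨdag H φ (H i) * sqrtρ G θ)
        + 4 * Matrix.trace ((chanΨdag H φ (H i) * chanΨdag H φ (H j)
            + chanΨdag H φ (H j) * chanΨdag H φ (H i)) * qbm G θ) := by
  simp only [Qφ, ψv, sqrtω, ← Matrix.smul_mulVec, ← Matrix.smul_kronecker,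
    dotc2_kron, chanΨdag_eq]
  exact key (uH H φ) (uH' H φ) (sqrtρ G θ) (chanΨ H φ (H i)) (chanΨ H φ (H j)) (qbm G θ)
    (uH_mul_uH' H φ) (uH'_mul_uH H φ) (sqrtρ_sq hG θ) (sqrtρ_herm hG θ)
    (chanΨ_herm hH φ (hH i)) (chanΨ_herm hH φ (hH j)) (uH_ct hH φ) (uH'_ct hH φ)

end
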